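/- If A(x), B(x) ∈ ℝ[[x]] with A(x) interlacing B(x) (i.e., the column (A,B) is fully interlacing), then for all nonnegative reals λ_0, ..., λ_{r-1}, the series Σ_{k=0}^{r-1} λ_k S_k^{(r)}A(x) interlaces Σ_{k=0}^{r-1} λ_k S_k^{(r)}B(x). -/

import Mathlib

open scoped BigOperators

/-- The coefficient of `x^n` in a power series, for an integer `n`
(zero when `n < 0`). -/
noncomputable def intCoeff (A : PowerSeries ℝ) (n : ℤ) : ℝ :=
  if 0 ≤ n then PowerSeries.coeff (R := ℝ) n.toNat A else 0

/-- A `ℤ × ℤ` matrix is totally positive (TP) if every finite square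
submatrix (rows and columns chosen in increasing order) has nonnegative
determinant. -/
def TP (M : ℤ → ℤ → ℝ) : Prop :=
  ∀ (n : ℕ) (r c : Fin n → ℤ), StrictMono r → StrictMono c →
    0 ≤ (Matrix.of fun a b => M (r a) (c b)).det

/-- The interlacing matrix `Lace(A)` of a `p × q` matrix of formal power
series: the `(u,v)`-entry, for `u = p·u' + i` (`0 ≤ i < p`) and
`v = q·v' + j` (`0 ≤ j < q`), is the coefficient of `x^(v'-u')` in `A i j`. -/
noncomputable def lace {p q : ℕ} [NeZero p] [NeZero q]
    (A : Fin p → Fin q → PowerSeries ℝ) : ℤ → ℤ → ℝ := fun u v =>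
  intCoeff
    (A ⟨(u % (p : ℤ)).toNat, by
          have hp : (0 : ℤ) < (p : ℤ) := by
            exact_mod_cast Nat.pos_of_ne_zero (NeZero.ne p)
          have h1 := Int.emod_nonneg u hp.ne'
          have h2 := Int.emod_lt_of_pos u hp
          omega⟩
       ⟨(v % (q : ℤ)).toNat, by
          have hq : (0 : ℤ) < (q : ℤ) := by
            exact_mod_cast Nat.pos_of_ne_zero (NeZero.ne q)
          have h1 := Int.emod_nonneg v hq.ne'
          have h2 := Int.emod_lt_of_pos v hq
          omega⟩)
    (v / (q : ℤ) - u / (p : ℤ))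

/-- A matrix of formal power series is fully interlacing when its
interlacing matrix is totally positive. -/
def FullyInterlacing {p q : ℕ} [NeZero p] [NeZero q]
    (A : Fin p → Fin q → PowerSeries ℝ) : Prop :=
  TP (lace A)

/-- A sequence of power series viewed as a `p × 1` column matrix. -/
noncomputable def colMat {p : ℕ} (A : Fin p → PowerSeries ℝ) :
    Fin p → Fin 1 → PowerSeries ℝ := fun i _ => A i

/-- `A(x)` interlaces `B(x)`: the `2 × 1` column `(A, B)ᵀ` is fully
interlacing. -/
def SeriesInterlaces (A B : PowerSeries ℝ) : Prop :=
  FullyInterlacing (colMat ![A, B])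

/-- A power series is AESW (a Pólya frequency sequence) when its Toeplitz
matrix `(a_{v-u})` is totally positive. -/
def IsAESW (A : PowerSeries ℝ) : Prop :=
  TP fun u v => intCoeff A (v - u)

/-- The `k`-th Veronese `r`-section `S_k^{(r)} A(x) = ∑_{n ≥ 0} a_{k+rn} xⁿ`. -/
noncomputable def veronese (r k : ℕ) (A : PowerSeries ℝ) : PowerSeries ℝ :=
  PowerSeries.mk fun n => PowerSeries.coeff (R := ℝ) (k + r * n) A


section StmtAux

lemma intCoeff_sum {ι : Type*} (s : Finset ι) (f : ι → PowerSeries ℝ) (n : ℤ) :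
    intCoeff (∑ k ∈ s, f k) n = ∑ k ∈ s, intCoeff (f k) n := by
  unfold intCoeff; split_ifs with h <;> simp

lemma intCoeff_smul (c : ℝ) (S : PowerSeries ℝ) (n : ℤ) :
    intCoeff (c • S) n = c * intCoeff S n := by
  unfold intCoeff; split_ifs with h <;> simp

lemma intCoeff_veronese {r k : ℕ} (hk : k < r) (X : PowerSeries ℝ) (m : ℤ) :
    intCoeff (veronese r k X) m = intCoeff X (k + r * m) := by
  unfold intCoeff veronese
  by_cases hm : 0 ≤ m
  · obtain ⟨n, rfl⟩ := Int.eq_ofNat_of_zero_le hm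
    have e : (k : ℤ) + (r : ℤ) * (n : ℤ) = ((k + r * n : ℕ) : ℤ) := by push_cast; ring
    rw [if_pos hm, if_pos (by positivity : (0:ℤ) ≤ (k:ℤ) + (r:ℤ) * (n:ℤ))]
    rw [e, Int.toNat_natCast, Int.toNat_natCast]
    simp
  · have h1 : (k : ℤ) + r * m < 0 := by
      have h2 : (r : ℤ) * m ≤ (r : ℤ) * (-1) := by
        apply mul_le_mul_of_nonneg_left (by omega) (by positivity)
      have hk' : (k : ℤ) ≤ (r : ℤ) - 1 := by omega
      linarith
    rw [if_neg hm, if_neg (by omega)]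

noncomputable def sel (A B : PowerSeries ℝ) (u : ℤ) : PowerSeries ℝ :=
  if u % 2 = 0 then A else B

lemma lace_col (A B : PowerSeries ℝ) (u v : ℤ) :
    lace (colMat ![A, B]) u v = intCoeff (sel A B u) (v - u / 2) := by
  unfold lace colMat sel
  rcases Int.emod_two_eq u with h | h <;> simp [h]

def psi (r : ℕ) (u : ℤ) : ℤ := 2 * ((r : ℤ) * (u / 2)) + u % 2

lemma psi_emod (r : ℕ) (u : ℤ) : psi r u % 2 = u % 2 := by
  unfold psi; generalize (r : ℤ) * (u / 2) = c; omega

lemma psi_ediv (r : ℕ) (u : ℤ) : psi r u / 2 = (r : ℤ) * (u / 2) := by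
  unfold psi; generalize (r : ℤ) * (u / 2) = c; omega

lemma psi_strictMono {r : ℕ} (hr : 0 < r) : StrictMono (psi r) := by
  intro u w huw
  unfold psi
  have hr' : (1 : ℤ) ≤ (r : ℤ) := by exact_mod_cast hr
  have h1 : u / 2 < w / 2 ∨ (u / 2 = w / 2 ∧ u % 2 < w % 2) := by omega
  rcases h1 with h1 | ⟨h1, h2⟩
  · have h3 := mul_le_mul_of_nonneg_left (by omega : u / 2 + 1 ≤ w / 2)
      (by linarith : (0 : ℤ) ≤ (r : ℤ))
    have h4 : (r : ℤ) * (u / 2 + 1) = (r : ℤ) * (u / 2) + r := by ring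
    have hu2 : u % 2 < 2 := Int.emod_lt_of_pos u (by norm_num)
    have hw2 : 0 ≤ w % 2 := Int.emod_nonneg w (by norm_num)
    linarith
  · rw [h1]; linarith

lemma col_lt {r : ℕ} {v v' k k' : ℤ} (hv : v < v') (hk2 : k < r) (hk' : 0 ≤ k') :
    (r : ℤ) * v + k < (r : ℤ) * v' + k' := by
  have h3 := mul_le_mul_of_nonneg_left (by omega : v + 1 ≤ v')
    (by positivity : (0 : ℤ) ≤ (r : ℤ))
  have h4 : (r : ℤ) * (v + 1) = (r : ℤ) * v + r := by ring
  linarith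

lemma lace_target (A B : PowerSeries ℝ) (r : ℕ) (l : Fin r → ℝ) (u v : ℤ) :
    lace (colMat ![∑ k : Fin r, l k • veronese r (k : ℕ) A,
        ∑ k : Fin r, l k • veronese r (k : ℕ) B]) u v
      = ∑ k : Fin r, l k * lace (colMat ![A, B]) (psi r u) ((r : ℤ) * v + (k : ℕ)) := by
  rw [lace_col]
  have hsel : sel (∑ k : Fin r, l k • veronese r (k : ℕ) A)
      (∑ k : Fin r, l k • veronese r (k : ℕ) B) u
      = ∑ k : Fin r, l k • veronese r (k : ℕ) (sel A B u) := by
    unfold sel; split_ifs <;> rfl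
  rw [hsel, intCoeff_sum]
  refine Finset.sum_congr rfl fun k _ => ?_
  rw [intCoeff_smul, intCoeff_veronese k.isLt, lace_col]
  have hsel2 : sel A B (psi r u) = sel A B u := by
    unfold sel; rw [psi_emod]
  rw [hsel2]
  congr 1
  rw [psi_ediv]
  ring_nf

end StmtAux

/-- If `A ≺ B` then `∑ λₖ S_k^{(r)} A ≺ ∑ λₖ S_k^{(r)} B` for all
nonnegative reals `λₖ`. -/
theorem stmt17 (A B : PowerSeries ℝ) (h : SeriesInterlaces A B)
    (r : ℕ) (hr : 0 < r) (l : Fin r → ℝ) (hl : ∀ k, 0 ≤ l k) :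
    SeriesInterlaces (∑ k : Fin r, l k • veronese r (k : ℕ) A)
      (∑ k : Fin r, l k • veronese r (k : ℕ) B) := by
  intro n u v hu hv
  set M := lace (colMat ![A, B]) with hMdef
  have hTP : TP M := h
  have hdet : (Matrix.of fun a b =>
        lace (colMat ![∑ k : Fin r, l k • veronese r (k : ℕ) A,
          ∑ k : Fin r, l k • veronese r (k : ℕ) B]) (u a) (v b))
      = Matrix.transpose (Matrix.of fun b a =>
          ∑ k : Fin r, l k * M (psi r (u a)) ((r : ℤ) * v b + (k : ℕ))) := by
    apply Matrix.ext
    intro a b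
    simp only [Matrix.of_apply, Matrix.transpose_apply]
    rw [lace_target]
  rw [hdet, Matrix.det_transpose]
  have e0 : ∀ (N : Matrix (Fin n) (Fin n) ℝ), N.det = Matrix.detRowAlternating N :=
    fun N => rfl
  rw [e0]
  have e1 : (Matrix.of fun b a =>
        ∑ k : Fin r, l k * M (psi r (u a)) ((r : ℤ) * v b + (k : ℕ)))
      = fun b => ∑ k : Fin r,
          (fun bb kk => l kk • (fun a => M (psi r (u a)) ((r : ℤ) * v bb + (kk : ℕ)))) b k := by
    funext b a
    simp [Finset.sum_apply]
  rw [e1]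
  have hmap := (Matrix.detRowAlternating (R := ℝ) (n := Fin n)).toMultilinearMap.map_sum
    (fun b k => l k • (fun a => M (psi r (u a)) ((r : ℤ) * v b + (k : ℕ))))
  simp only [AlternatingMap.coe_multilinearMap] at hmap
  rw [hmap]
  apply Finset.sum_nonneg
  intro K _
  have h1 : 0 ≤ ∏ b, l (K b) := Finset.prod_nonneg (fun b _ => hl _)
  have hsmul := (Matrix.detRowAlternating (R := ℝ) (n := Fin n)).toMultilinearMap.map_smul_univ
    (fun b => l (K b)) (fun b => fun a => M (psi r (u a)) ((r : ℤ) * v b + (K b : ℕ)))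
  simp only [AlternatingMap.coe_multilinearMap] at hsmul
  rw [hsmul]
  have h2 : 0 ≤ Matrix.detRowAlternating
      (fun b => fun a => M (psi r (u a)) ((r : ℤ) * v b + (K b : ℕ))) := by
    have h3 := hTP n (fun a => psi r (u a)) (fun b => (r : ℤ) * v b + (K b : ℕ))
      (fun a a' haa' => psi_strictMono hr (hu haa'))
      (fun b b' hbb' => col_lt (hv hbb') (by exact_mod_cast (K b).isLt) (by positivity))
    rw [← Matrix.det_transpose] at h3
    exact h3
  exact smul_nonneg h1 h2
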